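/- arXiv:math/0703127 — 3 statements merged into one kernel-verified Lean document; each statement's English description precedes it below -/
import Mathlib

section
/- Let f be a transcendental entire function in the class Δ with constants ε₁, ε₂ ∈ (0,1), and let c > 0 satisfy ε₁ > cε₁ + ε₁² (equivalently c + ε₁ < 1). Then there exists r₀ > 1 such that for every r ≥ r₀ there is some s ∈ (r, r^{1+ε₁/c}) with m(s,f) ≥ M(r,f)^{ε₂/2}. -/
open Filter MeasureTheory

/-- The maximum modulus `M(r,f) = max_{|z|=r} |f z|`. -/
noncomputable def maxMod (f : ℂ → ℂ) (r : ℝ) : ℝ :=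
  sSup ((fun z => ‖f z‖) '' Metric.sphere (0 : ℂ) r)

/-- The minimum modulus `m(r,f) = min_{|z|=r} |f z|`. -/
noncomputable def minMod (f : ℂ → ℂ) (r : ℝ) : ℝ :=
  sInf ((fun z => ‖f z‖) '' Metric.sphere (0 : ℂ) r)

/-- The upper logarithmic density of a set `E ⊆ (1,∞)`:
`limsup_{R→∞} (1/log R) ∫_{E∩(1,R)} dt/t`. -/
noncomputable def upperLogDens (E : Set ℝ) : ℝ :=
  Filter.limsup (fun R : ℝ => (Real.log R)⁻¹ * ∫ t in E ∩ Set.Ioo 1 R, t⁻¹) Filter.atTop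

/-- `f` is a transcendental entire function: entire and not a polynomial. -/
def TranscendentalEntire (f : ℂ → ℂ) : Prop :=
  Differentiable ℂ f ∧ ¬ ∃ p : Polynomial ℂ, ∀ z, f z = p.eval z

/-- The order `λ(f) = limsup_{r→∞} log log M(r,f) / log r`, as an extended real. -/
noncomputable def eOrder (f : ℂ → ℂ) : EReal :=
  Filter.limsup
    (fun r : ℝ => ((Real.log (Real.log (maxMod f r)) / Real.log r : ℝ) : EReal))
    Filter.atTop

/-- The lower order `ρ(f) = liminf_{r→∞} log log M(r,f) / log r`, as an extended real. -/
noncomputable def eLowerOrder (f : ℂ → ℂ) : EReal :=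
  Filter.liminf
    (fun r : ℝ => ((Real.log (Real.log (maxMod f r)) / Real.log r : ℝ) : EReal))
    Filter.atTop

lemma abs_le_maxMod {f : ℂ → ℂ} (hf : Differentiable ℂ f) {s : ℝ} (hs : 0 < s)
    {z : ℂ} (hz : ‖z‖ ≤ s) : ‖f z‖ ≤ maxMod f s := by
  have hb : BddAbove ((fun z => ‖f z‖) '' Metric.sphere (0 : ℂ) s) :=
    ((isCompact_sphere 0 s).image (continuous_norm.comp hf.continuous)).bddAbove
  have key : ∀ w ∈ frontier (Metric.ball (0:ℂ) s), ‖f w‖ ≤ maxMod f s := by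
    intro w hw
    rw [frontier_ball _ hs.ne'] at hw
    exact le_csSup hb ⟨w, hw, rfl⟩
  have := Complex.norm_le_of_forall_mem_frontier_norm_le (Metric.isBounded_ball (x := (0:ℂ)) (r := s))
    hf.diffContOnCl key (z := z) ?_
  · exact this
  · rw [closure_ball _ hs.ne', Metric.mem_closedBall, dist_zero_right]
    exact hz

lemma maxMod_mono {f : ℂ → ℂ} (hf : Differentiable ℂ f) {r s : ℝ} (hr : 0 ≤ r)
    (hrs : r ≤ s) (hs : 0 < s) : maxMod f r ≤ maxMod f s := by
  apply csSup_le
  · exact (NormedSpace.sphere_nonempty.2 hr).image _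
  · rintro x ⟨w, hw, rfl⟩
    rw [mem_sphere_zero_iff_norm] at hw
    exact abs_le_maxMod hf hs (le_of_eq_of_le hw hrs)

lemma minMod_nonneg (f : ℂ → ℂ) {s : ℝ} (hs : 0 ≤ s) : 0 ≤ minMod f s :=
  Real.sInf_nonneg (by rintro x ⟨w, hw, rfl⟩; exact norm_nonneg _)

lemma exists_maxMod_ge {f : ℂ → ℂ} (hf : TranscendentalEntire f) :
    ∃ r₁ : ℝ, 1 ≤ r₁ ∧ ∀ r ≥ r₁, 1 ≤ maxMod f r := by
  by_contra h
  push_neg at h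
  have hbd : ∀ z : ℂ, ‖f z‖ ≤ 1 := by
    intro z
    obtain ⟨r, hr, hmax⟩ := h (max ‖z‖ 1) (le_max_right _ _)
    exact le_trans (abs_le_maxMod hf.1 (lt_of_lt_of_le one_pos
      ((le_max_right _ _).trans hr)) (le_trans (le_max_left _ _) hr)) hmax.le
  have hconst : ∀ z : ℂ, f z = f 0 := by
    intro z
    apply hf.1.apply_eq_apply_of_bounded
    apply isBounded_iff_forall_norm_le.2 ⟨1, ?_⟩
    rintro x ⟨z, rfl⟩
    exact hbd z
  exact hf.2 ⟨Polynomial.C (f 0), fun z => by rw [hconst z, Polynomial.eval_C]⟩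

lemma integral_inv_Ioo {x y : ℝ} (hx : 0 < x) (hxy : x ≤ y) :
    ∫ t in Set.Ioo x y, t⁻¹ = Real.log y - Real.log x := by
  rw [← MeasureTheory.integral_Ioc_eq_integral_Ioo, ← intervalIntegral.integral_of_le hxy,
    integral_inv_of_pos hx (hx.trans_le hxy), Real.log_div (hx.trans_le hxy).ne' hx.ne']

lemma integrableOn_inv_Ioo (y : ℝ) : IntegrableOn (fun t : ℝ => t⁻¹) (Set.Ioo 1 y) := by
  apply IntegrableOn.mono_set (t := Set.Icc 1 y) _ Set.Ioo_subset_Icc_self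
  apply ContinuousOn.integrableOn_Icc
  exact ContinuousOn.inv₀ continuousOn_id (fun t ht => by linarith [ht.1])

lemma restr_le {S : Set ℝ} {y : ℝ} (hS : S ⊆ Set.Ioo 1 y) :
    (volume : Measure ℝ).restrict S ≤ (volume : Measure ℝ).restrict (Set.Ioo 1 y) :=
  Measure.restrict_mono hS le_rfl

lemma ae_nonneg_restr (S : Set ℝ) {y : ℝ} (hS : S ⊆ Set.Ioo 1 y) :
    0 ≤ᵐ[(volume : Measure ℝ).restrict S] (fun t : ℝ => t⁻¹) := by
  have h : 0 ≤ᵐ[(volume : Measure ℝ).restrict (Set.Ioo 1 y)] (fun t : ℝ => t⁻¹) := by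
    filter_upwards [ae_restrict_mem measurableSet_Ioo] with t ht
    exact inv_nonneg.2 (by linarith [ht.1])
  exact h.filter_mono (ae_mono (restr_le hS))

lemma int_upper {S : Set ℝ} {y : ℝ} (hS : S ⊆ Set.Ioo 1 y) :
    ∫ t in S, t⁻¹ ≤ ∫ t in Set.Ioo 1 y, t⁻¹ :=
  integral_mono_measure (restr_le hS) (ae_nonneg_restr _ (le_refl _)) (integrableOn_inv_Ioo y)

lemma int_lower {S : Set ℝ} {x y y' : ℝ} (hS : S ⊆ Set.Ioo 1 y) (hsub : Set.Ioo x y' ⊆ S) :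
    ∫ t in Set.Ioo x y', t⁻¹ ≤ ∫ t in S, t⁻¹ := by
  have hi : Integrable (fun t : ℝ => t⁻¹) ((volume : Measure ℝ).restrict S) :=
    Integrable.mono_measure (integrableOn_inv_Ioo y) (restr_le hS)
  exact integral_mono_measure (Measure.restrict_mono hsub le_rfl) (ae_nonneg_restr S hS) hi

lemma int_nonneg {S : Set ℝ} {y : ℝ} (hS : S ⊆ Set.Ioo 1 y) : 0 ≤ ∫ t in S, t⁻¹ :=
  integral_nonneg_of_ae (ae_nonneg_restr S hS)

theorem stmt_2 (f : ℂ → ℂ) (hf : TranscendentalEntire f)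
    (ε₁ ε₂ : ℝ) (hε₁ : ε₁ ∈ Set.Ioo (0:ℝ) 1) (hε₂ : ε₂ ∈ Set.Ioo (0:ℝ) 1)
    (hdens : upperLogDens
      {r : ℝ | 1 < r ∧ Real.log (minMod f r) ≤ ε₂ * Real.log (maxMod f r)} ≤ ε₁)
    (c : ℝ) (hc : 0 < c) (hcε : ε₁ > c * ε₁ + ε₁ ^ 2) :
    ∃ r₀ > (1:ℝ), ∀ r ≥ r₀, ∃ s ∈ Set.Ioo r (r ^ (1 + ε₁ / c)),
      minMod f s ≥ maxMod f r ^ (ε₂ / 2) := by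
  obtain ⟨r₁, hr₁1, hr₁⟩ := exists_maxMod_ge hf
  have hdiff := hf.1
  have hε₁0 := hε₁.1
  have hε₁1 := hε₁.2
  set a : ℝ := 1 + ε₁ / c with ha_def
  have hca : c + ε₁ < 1 := by nlinarith
  have ha1 : 1 < a := by
    have : 0 < ε₁ / c := div_pos hε₁0 hc
    simp only [ha_def]; linarith
  have ha0 : a ≠ 0 := by linarith
  have hcε₁pos : 0 < c + ε₁ := by linarith
  set b : ℝ := ε₁ / (c + ε₁) with hb_def
  have hε₁b : ε₁ < b := by
    rw [hb_def, lt_div_iff₀ hcε₁pos]; nlinarith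
  have hba : b = (a - 1) / a := by
    rw [hb_def, ha_def, div_eq_div_iff hcε₁pos.ne' (show (1:ℝ) + ε₁/c ≠ 0 by positivity)]
    field_simp
    ring
  set E := {r : ℝ | 1 < r ∧ Real.log (minMod f r) ≤ ε₂ * Real.log (maxMod f r)} with hE_def
  set u := fun R : ℝ => (Real.log R)⁻¹ * ∫ t in E ∩ Set.Ioo 1 R, t⁻¹ with hu_def
  have hbdd : IsBoundedUnder (· ≤ ·) atTop u := by
    refine ⟨1, ?_⟩
    rw [eventually_map]
    filter_upwards [eventually_ge_atTop (2:ℝ)] with R hR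
    have hlog : 0 < Real.log R := Real.log_pos (by linarith)
    have h1 : ∫ t in E ∩ Set.Ioo 1 R, t⁻¹ ≤ Real.log R := by
      calc ∫ t in E ∩ Set.Ioo 1 R, t⁻¹ ≤ ∫ t in Set.Ioo 1 R, t⁻¹ :=
            int_upper Set.inter_subset_right
        _ = Real.log R - Real.log 1 := integral_inv_Ioo one_pos (by linarith)
        _ = Real.log R := by simp
    calc u R ≤ (Real.log R)⁻¹ * Real.log R :=
          mul_le_mul_of_nonneg_left h1 (inv_nonneg.2 hlog.le)
      _ = 1 := inv_mul_cancel₀ hlog.ne'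
  have hlim : Filter.limsup u Filter.atTop ≤ ε₁ := hdens
  have hev : ∀ᶠ R in atTop, u R < b :=
    eventually_lt_of_limsup_lt (lt_of_le_of_lt hlim hε₁b) hbdd
  obtain ⟨R₀, hR₀⟩ := eventually_atTop.1 hev
  refine ⟨max (max r₁ R₀) 2, lt_of_lt_of_le one_lt_two (le_max_right _ _), ?_⟩
  intro r hr
  have hr2 : (2:ℝ) ≤ r := le_trans (le_max_right _ _) hr
  have hr1 : (1:ℝ) < r := by linarith
  have hrpos : (0:ℝ) < r := by linarith
  have hrr₁ : r₁ ≤ r := le_trans (le_trans (le_max_left _ _) (le_max_left _ _)) hr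
  have hrR₀ : R₀ ≤ r := le_trans (le_trans (le_max_right _ _) (le_max_left _ _)) hr
  set R := r ^ a with hR_def
  have hrR : r < R := by
    calc r = r ^ (1:ℝ) := (Real.rpow_one r).symm
      _ < r ^ a := (Real.rpow_lt_rpow_left_iff hr1).2 ha1
  by_contra hcon
  push_neg at hcon
  have hsub : Set.Ioo r R ⊆ E ∩ Set.Ioo 1 R := by
    intro s hs
    have hs1 : 1 < s := lt_trans hr1 hs.1
    refine ⟨⟨hs1, ?_⟩, hs1, hs.2⟩
    have hMr : 1 ≤ maxMod f r := hr₁ r hrr₁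
    have hMs : maxMod f r ≤ maxMod f s := maxMod_mono hdiff hrpos.le hs.1.le (by linarith)
    have hlogMr : 0 ≤ Real.log (maxMod f r) := Real.log_nonneg hMr
    have hlogMs : Real.log (maxMod f r) ≤ Real.log (maxMod f s) :=
      Real.log_le_log (by linarith) hMs
    have hm := hcon s hs
    have key : Real.log (minMod f s) ≤ (ε₂ / 2) * Real.log (maxMod f r) := by
      rcases le_or_gt (minMod f s) 1 with h1 | h1
      · exact le_trans (Real.log_nonpos (minMod_nonneg f (by linarith)) h1)
          (mul_nonneg (by linarith [hε₂.1]) hlogMr)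
      · calc Real.log (minMod f s) ≤ Real.log (maxMod f r ^ (ε₂ / 2)) :=
              Real.log_le_log (by linarith) hm.le
          _ = (ε₂ / 2) * Real.log (maxMod f r) := Real.log_rpow (by linarith) _
    have hε₂0 := hε₂.1
    calc Real.log (minMod f s) ≤ (ε₂ / 2) * Real.log (maxMod f r) := key
      _ ≤ ε₂ * Real.log (maxMod f s) := by nlinarith
  have hlogr : 0 < Real.log r := Real.log_pos hr1
  have hlogR : Real.log R = a * Real.log r := Real.log_rpow hrpos a
  have hint : (a - 1) * Real.log r ≤ ∫ t in E ∩ Set.Ioo 1 R, t⁻¹ := by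
    calc (a - 1) * Real.log r = Real.log R - Real.log r := by rw [hlogR]; ring
      _ = ∫ t in Set.Ioo r R, t⁻¹ := (integral_inv_Ioo hrpos hrR.le).symm
      _ ≤ ∫ t in E ∩ Set.Ioo 1 R, t⁻¹ := int_lower Set.inter_subset_right hsub
  have huR : b ≤ u R := by
    have hlogRpos : 0 < Real.log R := by rw [hlogR]; positivity
    calc b = (Real.log R)⁻¹ * ((a - 1) * Real.log r) := by
          rw [hba, hlogR]
          field_simp
      _ ≤ u R := mul_le_mul_of_nonneg_left hint (inv_nonneg.2 hlogRpos.le)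
  exact absurd huR (not_le.2 (hR₀ R (le_trans hrR₀ hrR.le)))
end

section
/- Let f be a transcendental entire function in the class Δ with 0 < ρ(f) ≤ λ(f) < ∞. Then there exist constants A ≥ 1 and L > 1 (so in particular AL > 1) and r₀ > 0 such that for every r ≥ r₀ there exists t with r^A ≤ t ≤ r^{AL} and m(t,f) > M(r,f)^{AL}. -/
open Filter MeasureTheory

lemma aux_integral_inv_Ioo {a b : ℝ} (ha : 0 < a) (hab : a ≤ b) :
    ∫ t in Set.Ioo a b, t⁻¹ = Real.log b - Real.log a := by
  have hb : 0 < b := ha.trans_le hab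
  rw [← MeasureTheory.integral_Ioc_eq_integral_Ioo, ← intervalIntegral.integral_of_le hab,
    integral_inv_of_pos ha hb, Real.log_div hb.ne' ha.ne']

lemma aux_integrableOn_inv {R : ℝ} {s : Set ℝ} (hs : s ⊆ Set.Ioo 1 R) :
    MeasureTheory.IntegrableOn (fun t : ℝ => t⁻¹) s := by
  have hc : ContinuousOn (fun t : ℝ => t⁻¹) (Set.Icc 1 R) :=
    ContinuousOn.inv₀ continuousOn_id fun x hx => ne_of_gt (lt_of_lt_of_le one_pos hx.1)
  exact hc.integrableOn_Icc.mono_set (hs.trans Set.Ioo_subset_Icc_self)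

lemma aux_inv_nonneg {R : ℝ} {s : Set ℝ} (hs : s ⊆ Set.Ioo 1 R) :
    0 ≤ᵐ[MeasureTheory.volume.restrict s] fun t : ℝ => t⁻¹ := by
  refine Filter.Eventually.filter_mono
    (MeasureTheory.ae_mono (MeasureTheory.Measure.restrict_mono hs le_rfl)) ?_
  filter_upwards [MeasureTheory.ae_restrict_mem measurableSet_Ioo] with x hx
  simp only [Pi.zero_apply]
  exact inv_nonneg.2 (le_of_lt (lt_trans one_pos hx.1))

lemma aux_minMod_nonneg (f : ℂ → ℂ) (r : ℝ) : 0 ≤ minMod f r :=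
  Real.sInf_nonneg fun x hx => by
    obtain ⟨z, _, hz⟩ := hx
    exact hz ▸ (norm_nonneg _)

lemma aux_eventually_two_le_maxMod (f : ℂ → ℂ) (hf : TranscendentalEntire f) :
    ∀ᶠ r in atTop, 2 ≤ maxMod f r := by
  by_contra h
  rw [Filter.not_eventually] at h
  have hb : ∀ z : ℂ, ‖f z‖ ≤ 2 := by
    intro z
    obtain ⟨r, hr, hlt⟩ := Filter.frequently_atTop.1 h (‖z‖ + 1)
    push_neg at hlt
    have hr0 : (0:ℝ) < r := lt_of_lt_of_le (by positivity) hr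
    have hz : z ∈ closure (Metric.ball (0:ℂ) r) := by
      rw [closure_ball (0:ℂ) hr0.ne']
      simpa [Metric.mem_closedBall] using le_trans (by linarith : ‖z‖ ≤ ‖z‖ + 1) hr
    refine Complex.norm_le_of_forall_mem_frontier_norm_le Metric.isBounded_ball
      hf.1.diffContOnCl (fun w hw => ?_) hz
    rw [frontier_ball (0:ℂ) hr0.ne'] at hw
    have hle : ‖f w‖ ≤ maxMod f r :=
      le_csSup (((isCompact_sphere (0:ℂ) r).image
        (continuous_norm.comp hf.1.continuous)).bddAbove) ⟨w, hw, rfl⟩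
    calc ‖f w‖ = ‖f w‖ := rfl
      _ ≤ maxMod f r := hle
      _ ≤ 2 := hlt.le
  obtain ⟨c, hc⟩ := hf.1.exists_const_forall_eq_of_bounded
    (isBounded_iff_forall_norm_le.2 ⟨2, fun x ⟨z, hz⟩ => hz ▸ hb z⟩)
  exact hf.2 ⟨Polynomial.C c, fun z => by simp [hc z]⟩

theorem stmt_7 (f : ℂ → ℂ) (hf : TranscendentalEntire f)
    (hΔ : ∃ ε₁ ∈ Set.Ioo (0:ℝ) 1, ∃ ε₂ ∈ Set.Ioo (0:ℝ) 1,
      upperLogDens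
        {r : ℝ | 1 < r ∧ Real.log (minMod f r) ≤ ε₂ * Real.log (maxMod f r)} ≤ ε₁)
    (hρpos : 0 < eLowerOrder f) (hOrders : eLowerOrder f ≤ eOrder f) (hOrderFin : eOrder f < ⊤) :
    ∃ A ≥ (1:ℝ), ∃ L > (1:ℝ), ∃ r₀ > (0:ℝ), ∀ r ≥ r₀, ∃ t : ℝ,
      r ^ A ≤ t ∧ t ≤ r ^ (A * L) ∧ minMod f t > maxMod f r ^ (A * L) := by
  obtain ⟨ε₁, hε₁, ε₂, hε₂, hdens⟩ := hΔ
  obtain ⟨hε₁0, hε₁1⟩ := hε₁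
  obtain ⟨hε₂0, hε₂1⟩ := hε₂
  set E : Set ℝ :=
    {r : ℝ | 1 < r ∧ Real.log (minMod f r) ≤ ε₂ * Real.log (maxMod f r)} with hEdef
  -- choose σ with 0 < σ and (σ : EReal) < eLowerOrder f
  obtain ⟨c, hc0, hcl⟩ := exists_between hρpos
  have hct : c ≠ ⊤ := ne_of_lt (lt_of_lt_of_le hcl le_top)
  have hcb : c ≠ ⊥ := ne_of_gt (lt_of_le_of_lt bot_le hc0)
  set σ : ℝ := c.toReal with hσdef
  have hσc : (σ : EReal) = c := EReal.coe_toReal hct hcb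
  have hσ0 : (0:ℝ) < σ := by
    have : ((0:ℝ) : EReal) < (σ : EReal) := by rw [hσc]; exact_mod_cast hc0
    exact_mod_cast this
  -- choose μ with eOrder f < (μ : EReal)
  obtain ⟨d, hod, hdtop⟩ := exists_between hOrderFin
  have hd0 : (0 : EReal) < d := lt_trans (lt_of_lt_of_le hρpos hOrders) hod
  have hdb : d ≠ ⊥ := ne_of_gt (lt_of_le_of_lt bot_le hd0)
  set μ : ℝ := d.toReal with hμdef
  have hμd : (μ : EReal) = d := EReal.coe_toReal (ne_of_lt hdtop) hdb
  have hμ0 : (0:ℝ) < μ := by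
    have : ((0:ℝ) : EReal) < (μ : EReal) := by rw [hμd]; exact_mod_cast hd0
    exact_mod_cast this
  -- constants L and A
  have hε₁' : (0:ℝ) < 1 - ε₁ := by linarith
  set L : ℝ := 1 / (1 - ε₁) + 1 with hLdef
  have hLinv : (0:ℝ) < 1 / (1 - ε₁) := by positivity
  have hL1 : (1:ℝ) < L := by simp only [hLdef]; linarith
  have hL0 : (0:ℝ) < L := by linarith
  have hLd : ε₁ < (L - 1) / L := by
    rw [lt_div_iff₀ hL0]
    have h1 : (1 - ε₁) * L = 1 + (1 - ε₁) := by
      rw [hLdef, mul_add, mul_one_div_cancel hε₁'.ne', mul_one]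
    nlinarith [sq_nonneg (1 - ε₁)]
  set A : ℝ := max 1 ((μ + 1) / σ) with hAdef
  have hA1 : (1:ℝ) ≤ A := le_max_left _ _
  have hA0 : (0:ℝ) < A := lt_of_lt_of_le one_pos hA1
  have hAσ : μ + 1 ≤ A * σ := by
    have := le_max_right 1 ((μ + 1) / σ)
    calc μ + 1 = (μ + 1) / σ * σ := by field_simp
      _ ≤ A * σ := by apply mul_le_mul_of_nonneg_right this hσ0.le
  have hAL1 : (1:ℝ) ≤ A * L := le_trans hA1 (le_mul_of_one_le_right hA0.le hL1.le)
  have hAL0 : (0:ℝ) < A * L := lt_of_lt_of_le one_pos hAL1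
  have hAAL : A ≤ A * L := le_mul_of_one_le_right hA0.le hL1.le
  -- eventual bounds from order hypotheses
  have hup : ∀ᶠ r : ℝ in atTop,
      Real.log (Real.log (maxMod f r)) / Real.log r < μ := by
    have hod' : Filter.limsup
        (fun r : ℝ => ((Real.log (Real.log (maxMod f r)) / Real.log r : ℝ) : EReal))
        Filter.atTop < (μ : EReal) := by rw [hμd]; exact hod
    filter_upwards [Filter.eventually_lt_of_limsup_lt hod'] with r hr
    exact_mod_cast hr
  have hdown : ∀ᶠ r : ℝ in atTop,
      σ < Real.log (Real.log (maxMod f r)) / Real.log r := by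
    have hcl' : (σ : EReal) < Filter.liminf
        (fun r : ℝ => ((Real.log (Real.log (maxMod f r)) / Real.log r : ℝ) : EReal))
        Filter.atTop := by rw [hσc]; exact hcl
    filter_upwards [Filter.eventually_lt_of_lt_liminf hcl'] with r hr
    exact_mod_cast hr
  have hM2 := aux_eventually_two_le_maxMod f hf
  -- pointwise forms
  have hupper : ∀ᶠ r : ℝ in atTop, Real.log (maxMod f r) < r ^ μ := by
    filter_upwards [hup, Filter.eventually_ge_atTop 2] with r h hr2
    have hr1 : (1:ℝ) < r := by linarith
    have hlr : 0 < Real.log r := Real.log_pos hr1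
    have h' : Real.log (Real.log (maxMod f r)) < μ * Real.log r := (div_lt_iff₀ hlr).mp h
    have hone : (1:ℝ) < r ^ μ := by
      rw [show (1:ℝ) = r ^ (0:ℝ) from (Real.rpow_zero r).symm]
      exact Real.rpow_lt_rpow_of_exponent_lt hr1 hμ0
    by_cases hM : Real.log (maxMod f r) ≤ 1
    · linarith
    · push_neg at hM
      have h0 : 0 < Real.log (maxMod f r) := by linarith
      calc Real.log (maxMod f r) = Real.exp (Real.log (Real.log (maxMod f r))) :=
            (Real.exp_log h0).symm
        _ < Real.exp (μ * Real.log r) := Real.exp_lt_exp.2 h'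
        _ = r ^ μ := by rw [Real.rpow_def_of_pos (by linarith : (0:ℝ) < r), mul_comm]
  have hlower : ∀ᶠ s : ℝ in atTop, s ^ σ < Real.log (maxMod f s) := by
    filter_upwards [hdown, hM2, Filter.eventually_ge_atTop 2] with s h h2 hs2
    have hs1 : (1:ℝ) < s := by linarith
    have hls : 0 < Real.log s := Real.log_pos hs1
    have h' : σ * Real.log s < Real.log (Real.log (maxMod f s)) := (lt_div_iff₀ hls).mp h
    have hM0 : 0 < Real.log (maxMod f s) := Real.log_pos (by linarith)
    have h1 : 1 < Real.log (maxMod f s) := by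
      by_contra hle
      push_neg at hle
      have : Real.log (Real.log (maxMod f s)) ≤ 0 := Real.log_nonpos hM0.le hle
      nlinarith [mul_pos hσ0 hls]
    calc s ^ σ = Real.exp (Real.log s * σ) := Real.rpow_def_of_pos (by linarith) σ
      _ = Real.exp (σ * Real.log s) := by rw [mul_comm]
      _ < Real.exp (Real.log (Real.log (maxMod f s))) := Real.exp_lt_exp.2 h'
      _ = Real.log (maxMod f s) := Real.exp_log (by linarith)
  -- density step
  have hnot : ∀ᶠ r : ℝ in atTop, ¬ (Set.Ioo (r ^ A) (r ^ (A * L)) ⊆ E) := by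
    by_contra hcon
    rw [Filter.not_eventually] at hcon
    simp only [not_not] at hcon
    set u : ℝ → ℝ := fun R => (Real.log R)⁻¹ * ∫ t in E ∩ Set.Ioo 1 R, t⁻¹ with hudef
    have hub : ∀ᶠ R : ℝ in atTop, u R ≤ 1 := by
      filter_upwards [Filter.eventually_ge_atTop 2] with R hR
      have hR1 : (1:ℝ) < R := by linarith
      have hlR : 0 < Real.log R := Real.log_pos hR1
      have hint : (∫ t in E ∩ Set.Ioo 1 R, t⁻¹) ≤ ∫ t in Set.Ioo 1 R, t⁻¹ :=
        setIntegral_mono_set (aux_integrableOn_inv (le_refl _))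
          (aux_inv_nonneg (le_refl _)) (Set.inter_subset_right).eventuallyLE
      rw [aux_integral_inv_Ioo one_pos hR1.le, Real.log_one, sub_zero] at hint
      calc u R ≤ (Real.log R)⁻¹ * Real.log R :=
            mul_le_mul_of_nonneg_left hint (inv_nonneg.2 hlR.le)
        _ = 1 := inv_mul_cancel₀ hlR.ne'
    have hfreq : ∃ᶠ R : ℝ in atTop, (L - 1) / L ≤ u R := by
      rw [Filter.frequently_atTop] at hcon ⊢
      intro b
      obtain ⟨r, hr, hsub⟩ := hcon (max b 2)
      have hr2 : (2:ℝ) ≤ r := le_trans (le_max_right _ _) hr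
      have hrb : b ≤ r := le_trans (le_max_left _ _) hr
      have hr1 : (1:ℝ) < r := by linarith
      have hr0 : (0:ℝ) < r := by linarith
      have hlr : 0 < Real.log r := Real.log_pos hr1
      have hrA : r ≤ r ^ A := by
        calc r = r ^ (1:ℝ) := (Real.rpow_one r).symm
          _ ≤ r ^ A := Real.rpow_le_rpow_of_exponent_le hr1.le hA1
      have hrAL : r ^ A ≤ r ^ (A * L) := Real.rpow_le_rpow_of_exponent_le hr1.le hAAL
      refine ⟨r ^ (A * L), le_trans hrb (le_trans hrA hrAL), ?_⟩
      have hrA1 : (1:ℝ) < r ^ A := lt_of_lt_of_le hr1 hrA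
      have hsub2 : Set.Ioo (r ^ A) (r ^ (A * L)) ⊆ E ∩ Set.Ioo 1 (r ^ (A * L)) :=
        fun x hx => ⟨hsub hx, lt_trans hrA1 hx.1, hx.2⟩
      have hI : (∫ t in Set.Ioo (r ^ A) (r ^ (A * L)), t⁻¹) ≤
          ∫ t in E ∩ Set.Ioo 1 (r ^ (A * L)), t⁻¹ :=
        setIntegral_mono_set (aux_integrableOn_inv Set.inter_subset_right)
          (aux_inv_nonneg Set.inter_subset_right) hsub2.eventuallyLE
      have hval : (∫ t in Set.Ioo (r ^ A) (r ^ (A * L)), t⁻¹) = A * (L - 1) * Real.log r := by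
        rw [aux_integral_inv_Ioo (by positivity) hrAL, Real.log_rpow hr0, Real.log_rpow hr0]
        ring
      have hlogR : Real.log (r ^ (A * L)) = A * L * Real.log r := Real.log_rpow hr0 _
      have hlRpos : 0 < Real.log (r ^ (A * L)) := by rw [hlogR]; positivity
      calc (L - 1) / L = (Real.log (r ^ (A * L)))⁻¹ * (A * (L - 1) * Real.log r) := by
            rw [hlogR]; field_simp
        _ ≤ u (r ^ (A * L)) := by
            rw [hudef]
            simp only
            rw [← hval]
            exact mul_le_mul_of_nonneg_left hI (inv_nonneg.2 hlRpos.le)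
    have hle : (L - 1) / L ≤ ε₁ := by
      have hlim : (L - 1) / L ≤ Filter.limsup u Filter.atTop :=
        Filter.le_limsup_of_frequently_le hfreq ⟨1, Filter.eventually_map.2 hub⟩
      have : Filter.limsup u Filter.atTop = upperLogDens E := rfl
      linarith [hdens, this ▸ hlim]
    linarith
  have hM2' := hM2
  -- assemble r₀
  obtain ⟨s₁, h₁⟩ := Filter.eventually_atTop.1 hupper
  obtain ⟨s₂, h₂⟩ := Filter.eventually_atTop.1 hlower
  obtain ⟨s₃, h₃⟩ := Filter.eventually_atTop.1 hnot
  obtain ⟨s₄, h₄⟩ := Filter.eventually_atTop.1 hM2'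
  set r₀ : ℝ := max (max s₁ s₂) (max (max s₃ s₄) (max 2 (A * L / ε₂ + 1))) with hr₀def
  have hr₀2 : (2:ℝ) ≤ r₀ :=
    le_trans (le_max_left 2 _) (le_trans (le_max_right _ _) (le_max_right _ _))
  refine ⟨A, hA1, L, hL1, r₀, by linarith, fun r hr => ?_⟩
  have hr2 : (2:ℝ) ≤ r := le_trans hr₀2 hr
  have hr1 : (1:ℝ) < r := by linarith
  have hr0 : (0:ℝ) < r := by linarith
  have hrs₁ : s₁ ≤ r := le_trans (le_trans (le_max_left _ _) (le_max_left _ _)) hr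
  have hrs₂ : s₂ ≤ r := le_trans (le_trans (le_max_right _ _) (le_max_left _ _)) hr
  have hrs₃ : s₃ ≤ r :=
    le_trans (le_trans (le_max_left _ _) (le_trans (le_max_left _ _) (le_max_right _ _))) hr
  have hrs₄ : s₄ ≤ r :=
    le_trans (le_trans (le_max_right _ _) (le_trans (le_max_left _ _) (le_max_right _ _))) hr
  have hrε : A * L / ε₂ + 1 ≤ r :=
    le_trans (le_trans (le_max_right 2 _) (le_trans (le_max_right _ _) (le_max_right _ _))) hr
  obtain ⟨t, htIoo, htE⟩ := Set.not_subset.1 (h₃ r hrs₃)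
  have hrA : r ≤ r ^ A := by
    calc r = r ^ (1:ℝ) := (Real.rpow_one r).symm
      _ ≤ r ^ A := Real.rpow_le_rpow_of_exponent_le hr1.le hA1
  have ht1 : (1:ℝ) < t := lt_trans (lt_of_lt_of_le hr1 hrA) htIoo.1
  have htr : r ≤ t := le_trans hrA htIoo.1.le
  refine ⟨t, htIoo.1.le, htIoo.2.le, ?_⟩
  have htE' : ε₂ * Real.log (maxMod f t) < Real.log (minMod f t) := by
    by_contra hle
    push_neg at hle
    exact htE ⟨ht1, hle⟩
  have hMt : t ^ σ < Real.log (maxMod f t) := h₂ t (le_trans hrs₂ htr)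
  have hMr : Real.log (maxMod f r) < r ^ μ := h₁ r hrs₁
  have hMr2 : (2:ℝ) ≤ maxMod f r := h₄ r hrs₄
  have hMr0 : (0:ℝ) < maxMod f r := by linarith
  have c1 : A * L * Real.log (maxMod f r) < A * L * r ^ μ :=
    mul_lt_mul_of_pos_left hMr hAL0
  have c2 : A * L * r ^ μ ≤ ε₂ * r ^ (A * σ) := by
    have h1 : r ^ (μ + 1) ≤ r ^ (A * σ) := Real.rpow_le_rpow_of_exponent_le hr1.le hAσ
    have h2 : r ^ (μ + 1) = r ^ μ * r := by
      rw [Real.rpow_add hr0, Real.rpow_one]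
    have h3 : A * L < ε₂ * r := by
      have : A * L / ε₂ < r := by linarith
      calc A * L = A * L / ε₂ * ε₂ := by field_simp
        _ < r * ε₂ := by apply mul_lt_mul_of_pos_right this hε₂0
        _ = ε₂ * r := mul_comm _ _
    have h4 : 0 < r ^ μ := Real.rpow_pos_of_pos hr0 μ
    calc A * L * r ^ μ ≤ ε₂ * r * r ^ μ := mul_le_mul_of_nonneg_right h3.le h4.le
      _ = ε₂ * (r ^ μ * r) := by ring
      _ = ε₂ * r ^ (μ + 1) := by rw [h2]
      _ ≤ ε₂ * r ^ (A * σ) := mul_le_mul_of_nonneg_left h1 hε₂0.le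
  have c3 : ε₂ * r ^ (A * σ) ≤ ε₂ * t ^ σ := by
    have h1 : r ^ (A * σ) = (r ^ A) ^ σ := Real.rpow_mul hr0.le A σ
    have h2 : (r ^ A) ^ σ ≤ t ^ σ :=
      Real.rpow_le_rpow (Real.rpow_nonneg hr0.le A) htIoo.1.le hσ0.le
    rw [h1]
    exact mul_le_mul_of_nonneg_left h2 hε₂0.le
  have c4 : ε₂ * t ^ σ < ε₂ * Real.log (maxMod f t) := mul_lt_mul_of_pos_left hMt hε₂0
  have hfin : A * L * Real.log (maxMod f r) < Real.log (minMod f t) := by linarith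
  have hmlog : 0 < Real.log (minMod f t) := by
    have : 0 < ε₂ * t ^ σ := mul_pos hε₂0 (Real.rpow_pos_of_pos (by linarith) σ)
    linarith
  have hmt0 : 0 < minMod f t := by
    rcases lt_or_eq_of_le (aux_minMod_nonneg f t) with h | h
    · exact h
    · exfalso; rw [← h, Real.log_zero] at hmlog; linarith
  have : maxMod f r ^ (A * L) < minMod f t := by
    calc maxMod f r ^ (A * L) = Real.exp (Real.log (maxMod f r) * (A * L)) :=
          Real.rpow_def_of_pos hMr0 _
      _ < Real.exp (Real.log (minMod f t)) := by
          rw [mul_comm]; exact Real.exp_lt_exp.2 hfin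
      _ = minMod f t := Real.exp_log hmt0
  exact this
end

section
/- Let (r_n)_{n≥1} be a sequence of positive real numbers such that r_{n+1} ≥ 16 r_n and 4 r_n ≥ 16^{2n} for all n ≥ 1. If G ⊆ ⋃_{n≥1} (r_n/4, 4r_n) is a measurable set, then the upper logarithmic density of G is at most 1/2. -/
open Filter MeasureTheory

theorem stmt_14 (r : ℕ → ℝ) (hpos : ∀ n ≥ 1, 0 < r n)
    (hgrow : ∀ n ≥ 1, 16 * r n ≤ r (n + 1))
    (hbig : ∀ n ≥ 1, (16:ℝ) ^ (2 * n) ≤ 4 * r n)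
    (G : Set ℝ) (hGmeas : MeasurableSet G)
    (hG : G ⊆ ⋃ n ∈ Set.Ici 1, Set.Ioo (r n / 4) (4 * r n)) :
    upperLogDens G ≤ 1 / 2 := by
  have hlog16 : (0:ℝ) < Real.log 16 := Real.log_pos (by norm_num)
  -- the intervals are "separated"
  have hmono : ∀ m n, 1 ≤ m → m < n → 4 * r m ≤ r n / 4 := by
    intro m n hm
    induction n with
    | zero => omega
    | succ k ih =>
      intro hmn
      rcases Nat.lt_succ_iff_lt_or_eq.mp hmn with h | h
      · have hk : 1 ≤ k := by omega
        have h1 := ih h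
        have h2 := hgrow k hk
        have h3 := hpos k hk
        linarith
      · subst h
        have := hgrow m hm
        linarith
  have hd : ∀ m n, 1 ≤ m → m < n →
      Disjoint (Set.Ioo (r m / 4) (4 * r m)) (Set.Ioo (r n / 4) (4 * r n)) := by
    intro m n hm h
    have := hmono m n hm h
    rw [Set.disjoint_left]
    rintro x ⟨_, hx2⟩ ⟨hx3, _⟩
    linarith
  -- main pointwise bound
  have key : ∀ R : ℝ, 2 ≤ R →
      (Real.log R)⁻¹ * ∫ t in G ∩ Set.Ioo 1 R, t⁻¹ ≤
        1 / 2 + Real.log 16 / (2 * Real.log R) := by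
    intro R hR
    have hlogR : 0 < Real.log R := Real.log_pos (by linarith)
    set N : ℕ := ⌊(Real.log R / Real.log 16 + 1) / 2⌋₊ with hNdef
    set S : Set ℝ := ⋃ n ∈ Finset.Icc 1 N, Set.Ioo (r n / 4) (4 * r n) with hSdef
    have hsub : G ∩ Set.Ioo 1 R ⊆ S := by
      rintro x ⟨hxG, hx1, hxR⟩
      obtain ⟨n, hxl, hn, hxr⟩ : ∃ n, r n / 4 < x ∧ 1 ≤ n ∧ x < 4 * r n := by
        simpa using hG hxG
      have hxI : x ∈ Set.Ioo (r n / 4) (4 * r n) := ⟨hxl, hxr⟩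
      refine Set.mem_biUnion (Finset.mem_Icc.mpr ⟨hn, ?_⟩) hxI
      have h1 : (16:ℝ) ^ (2 * n) ≤ 4 * r n := hbig n hn
      have h2 : r n / 4 < R := lt_trans hxl hxR
      have h3 : (16:ℝ) ^ (2 * n) < 16 * R := by linarith
      have h4 : Real.log ((16:ℝ) ^ (2 * n)) < Real.log (16 * R) :=
        Real.log_lt_log (by positivity) h3
      rw [Real.log_pow, Real.log_mul (by norm_num) (by linarith)] at h4
      push_cast at h4
      apply Nat.le_floor
      have ha : Real.log R / Real.log 16 * Real.log 16 = Real.log R :=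
        div_mul_cancel₀ _ (ne_of_gt hlog16)
      have h5 : (n:ℝ) * 2 ≤ Real.log R / Real.log 16 + 1 := by
        rw [← mul_le_mul_iff_left₀ hlog16]
        nlinarith
      linarith
    have hint : ∀ n ∈ Finset.Icc 1 N,
        IntegrableOn (fun t : ℝ => t⁻¹) (Set.Ioo (r n / 4) (4 * r n)) := by
      intro n hn
      have hrn : 0 < r n := hpos n (Finset.mem_Icc.mp hn).1
      have hcont : ContinuousOn (fun t : ℝ => t⁻¹) (Set.Icc (r n / 4) (4 * r n)) :=
        ContinuousOn.inv₀ continuousOn_id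
          (fun x hx => ne_of_gt (lt_of_lt_of_le (by linarith) hx.1))
      exact (hcont.integrableOn_Icc).mono_set Set.Ioo_subset_Icc_self
    have hdisj : Set.Pairwise ↑(Finset.Icc 1 N)
        (Function.onFun Disjoint fun n => Set.Ioo (r n / 4) (4 * r n)) := by
      intro m hm n hn hmn
      simp only [Finset.coe_Icc, Set.mem_Icc] at hm hn
      rcases lt_or_gt_of_ne hmn with h | h
      · exact hd m n hm.1 h
      · exact (hd n m hn.1 h).symm
    have hSmeas : MeasurableSet S :=
      MeasurableSet.biUnion (Finset.Icc 1 N).countable_toSet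
        (fun n _ => measurableSet_Ioo)
    have hSint : IntegrableOn (fun t : ℝ => t⁻¹) S :=
      integrableOn_finset_iUnion.mpr hint
    have hU : ∫ t in S, t⁻¹ = ∑ n ∈ Finset.Icc 1 N, ∫ t in Set.Ioo (r n / 4) (4 * r n), t⁻¹ :=
      integral_biUnion_finset _ (fun n _ => measurableSet_Ioo) hdisj hint
    have hval : ∀ n ∈ Finset.Icc 1 N,
        ∫ t in Set.Ioo (r n / 4) (4 * r n), t⁻¹ = Real.log 16 := by
      intro n hn
      have hrn : 0 < r n := hpos n (Finset.mem_Icc.mp hn).1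
      rw [← integral_Ioc_eq_integral_Ioo,
        ← intervalIntegral.integral_of_le (by linarith : r n / 4 ≤ 4 * r n),
        integral_inv (Set.notMem_uIcc_of_lt (by linarith) (by linarith)),
        show (4 * r n) / (r n / 4) = (16:ℝ) by
          rw [div_div_eq_mul_div, div_eq_iff (ne_of_gt hrn)]; ring]
    have hsum : ∫ t in S, t⁻¹ ≤ (N : ℝ) * Real.log 16 := by
      rw [hU, Finset.sum_congr rfl hval, Finset.sum_const, Nat.card_Icc]
      simp [nsmul_eq_mul]
    have hmle : ∫ t in G ∩ Set.Ioo 1 R, t⁻¹ ≤ ∫ t in S, t⁻¹ := by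
      apply setIntegral_mono_set hSint
      · apply ae_restrict_of_forall_mem hSmeas
        intro x hx
        simp only [hSdef, Set.mem_iUnion] at hx
        obtain ⟨n, hn, hx1, _⟩ := hx
        have : 0 < r n := hpos n (Finset.mem_Icc.mp hn).1
        have : 0 < x := by linarith
        positivity
      · exact HasSubset.Subset.eventuallyLE hsub
    have hNle : (N : ℝ) ≤ (Real.log R / Real.log 16 + 1) / 2 := by
      apply Nat.floor_le
      have : 0 ≤ Real.log R / Real.log 16 := div_nonneg hlogR.le hlog16.le
      linarith
    have ha : Real.log R / Real.log 16 * Real.log 16 = Real.log R :=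
      div_mul_cancel₀ _ (ne_of_gt hlog16)
    have hItotal : ∫ t in G ∩ Set.Ioo 1 R, t⁻¹ ≤ (Real.log R + Real.log 16) / 2 := by
      have : (N : ℝ) * Real.log 16 ≤ (Real.log R + Real.log 16) / 2 := by nlinarith
      linarith
    calc (Real.log R)⁻¹ * ∫ t in G ∩ Set.Ioo 1 R, t⁻¹
        ≤ (Real.log R)⁻¹ * ((Real.log R + Real.log 16) / 2) :=
          mul_le_mul_of_nonneg_left hItotal (inv_nonneg.mpr hlogR.le)
      _ = 1 / 2 + Real.log 16 / (2 * Real.log R) := by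
          have h0 : Real.log R ≠ 0 := ne_of_gt hlogR
          field_simp
  -- the comparison function tends to 1/2
  have hg : Tendsto (fun R : ℝ => 1 / 2 + Real.log 16 / (2 * Real.log R)) atTop
      (nhds (1 / 2)) := by
    have h1 : Tendsto (fun R : ℝ => 2 * Real.log R) atTop atTop :=
      Real.tendsto_log_atTop.const_mul_atTop two_pos
    have h2 : Tendsto (fun R : ℝ => Real.log 16 / (2 * Real.log R)) atTop (nhds 0) :=
      Tendsto.div_atTop tendsto_const_nhds h1
    simpa using tendsto_const_nhds.add h2
  have hbound : (fun R : ℝ => (Real.log R)⁻¹ * ∫ t in G ∩ Set.Ioo 1 R, t⁻¹)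
      ≤ᶠ[atTop] fun R => 1 / 2 + Real.log 16 / (2 * Real.log R) :=
    eventually_atTop.mpr ⟨2, key⟩
  have hnonneg : ∀ᶠ R : ℝ in atTop,
      (0:ℝ) ≤ (Real.log R)⁻¹ * ∫ t in G ∩ Set.Ioo 1 R, t⁻¹ := by
    filter_upwards [eventually_ge_atTop (2:ℝ)] with R hR
    have hlogR : 0 < Real.log R := Real.log_pos (by linarith)
    have : 0 ≤ ∫ t in G ∩ Set.Ioo 1 R, t⁻¹ := by
      apply setIntegral_nonneg (hGmeas.inter measurableSet_Ioo)
      intro x hx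
      have : (1:ℝ) < x := hx.2.1
      positivity
    positivity
  have hco : IsCoboundedUnder (· ≤ ·) atTop
      (fun R : ℝ => (Real.log R)⁻¹ * ∫ t in G ∩ Set.Ioo 1 R, t⁻¹) :=
    IsCoboundedUnder.of_frequently_ge hnonneg.frequently
  have hbd : IsBoundedUnder (· ≤ ·) atTop
      (fun R : ℝ => 1 / 2 + Real.log 16 / (2 * Real.log R)) :=
    hg.isBoundedUnder_le
  have hle := limsup_le_limsup hbound hco hbd
  rw [hg.limsup_eq] at hle
  exact hle
end
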